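/- Let F be a field, let n, s ≥ 1, let σ ∈ {1,−1}, and let λB+A be an arbitrary pencil of size (s+1)n×(s+1)n over F. Let L(λ) be the associated block Kronecker pencil and define the n×n matrix polynomial P(λ) := (Λ_s(λ)^T⊗I_n)(λB+A)(Λ_s(λ)⊗I_n), regarded as a polynomial of grade 2s+1. Then L(λ) is a strong linearization of P(λ): there exist unimodular U(λ), V(λ) of size (2s+1)n with U(λ)L(λ)V(λ) = diag(I_{2sn}, P(λ)), and there exist unimodular U′(λ), V′(λ) with U′(λ)(rev_1 L)(λ)V′(λ) = diag(I_{2sn}, rev_{2s+1} P(λ)). -/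

import Mathlib

open Polynomial Matrix
open scoped Kronecker

noncomputable section

/-- Entrywise inclusion of a constant matrix into polynomial matrices. -/
def matC {F : Type} [Field F] {m l : Type*} (M : Matrix m l F) : Matrix m l (Polynomial F) :=
  M.map fun a => (C a : Polynomial F)

/-- The pencil `λ ↦ A + λ B`, represented as a matrix over `F[λ]`. -/
def pencil {F : Type} [Field F] {m l : Type*} (A B : Matrix m l F) :
    Matrix m l (Polynomial F) :=
  matC A + (X : Polynomial F) • matC B

/-- Grade-`g` reversal `rev_g`, applied entrywise. -/
def revMat {F : Type} [Field F] {m l : Type*} (g : ℕ) (M : Matrix m l (Polynomial F)) :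
    Matrix m l (Polynomial F) :=
  M.map fun q => q.reflect g

/-- Entrywise evaluation of a polynomial matrix at a point. -/
def evalMat {F : Type} [Field F] {m l : Type*} (a : F) (M : Matrix m l (Polynomial F)) :
    Matrix m l F :=
  M.map fun q => q.eval a

/-- The matrix polynomial `P(λ) = ∑_{k=0}^d λ^k P_k` built from its coefficients. -/
def polyOfCoeffs {F : Type} [Field F] {n : ℕ} (d : ℕ) (Pc : ℕ → Matrix (Fin n) (Fin n) F) :
    Matrix (Fin n) (Fin n) (Polynomial F) :=
  ∑ k ∈ Finset.range (d + 1), (X : Polynomial F) ^ k • matC (Pc k)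

/-- The `(i,j)` block of a block-partitioned matrix. -/
def blk {α p q n m : Type*} (A : Matrix (p × n) (q × m) α) (i : p) (j : q) :
    Matrix n m α :=
  Matrix.of fun r c => A (i, r) (j, c)

/-- `Λ_s(λ) ⊗ I_n`, an `(s+1)n × n` polynomial matrix whose `i`-th block is `λ^{s-i} I_n`. -/
def Lam (F : Type) [Field F] (s n : ℕ) :
    Matrix (Fin (s+1) × Fin n) (Fin n) (Polynomial F) :=
  Matrix.of fun p c => if p.2 = c then (X : Polynomial F) ^ (s - (p.1 : ℕ)) else 0

/-- The pencil `L_s(λ) ∈ F[λ]^{s×(s+1)}` with `-1` on the diagonal and `λ` on the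
superdiagonal. -/
def Lpen (F : Type) [Field F] (s : ℕ) : Matrix (Fin s) (Fin (s+1)) (Polynomial F) :=
  Matrix.of fun i j =>
    if (j : ℕ) = (i : ℕ) then -1 else if (j : ℕ) = (i : ℕ) + 1 then X else 0

/-- The block Kronecker pencil `[[λB+A, L_s(λ)ᵀ⊗I_n],[σ L_s(λ)⊗I_n, 0]]` associated with a
pencil `M = λB+A` of size `(s+1)n × (s+1)n`. -/
def blockKron (F : Type) [Field F] (s n : ℕ) (σ : F)
    (M : Matrix (Fin (s+1) × Fin n) (Fin (s+1) × Fin n) (Polynomial F)) :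
    Matrix ((Fin (s+1) × Fin n) ⊕ (Fin s × Fin n)) ((Fin (s+1) × Fin n) ⊕ (Fin s × Fin n))
      (Polynomial F) :=
  Matrix.fromBlocks M (Lpen F s ⊗ₖ (1 : Matrix (Fin n) (Fin n) (Polynomial F)))ᵀ
    (σ • (Lpen F s ⊗ₖ (1 : Matrix (Fin n) (Fin n) (Polynomial F)))) 0

/-- `L` is a linearization of `P`: there are unimodular `U`, `V` with
`U L V = diag(I_m, P)` (up to the fixed identification of index sets). -/
def IsLinearization {F : Type} [Field F] (m : ℕ) {ι ρ : Type*} [Fintype ι] [DecidableEq ι]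
    [Fintype ρ] [DecidableEq ρ] (L : Matrix ι ι (Polynomial F))
    (P : Matrix ρ ρ (Polynomial F)) : Prop :=
  ∃ (e : (Fin m ⊕ ρ) ≃ ι) (U V : Matrix ι ι (Polynomial F)),
    IsUnit U.det ∧ IsUnit V.det ∧
      U * L * V =
        (Matrix.fromBlocks (1 : Matrix (Fin m) (Fin m) (Polynomial F)) 0 0 P).submatrix
          e.symm e.symm

/-- The block conditions `∑_{i+j=d+2-k} B_{ij} + ∑_{i+j=d+1-k} A_{ij} = P_k` for
`k = 0,…,d` (blocks are indexed here `0`-based, so `i+j` `1`-based is `i+j+2` `0`-based). -/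
def blockConds {F : Type} [Field F] {s n : ℕ} (d : ℕ) (Pc : ℕ → Matrix (Fin n) (Fin n) F)
    (A B : Matrix (Fin (s+1) × Fin n) (Fin (s+1) × Fin n) F) : Prop :=
  ∀ k, k ≤ d →
    (∑ p ∈ Finset.univ.filter
        (fun p : Fin (s+1) × Fin (s+1) => (p.1 : ℕ) + (p.2 : ℕ) + 2 + k = d + 2),
        blk B p.1 p.2) +
      (∑ p ∈ Finset.univ.filter
        (fun p : Fin (s+1) × Fin (s+1) => (p.1 : ℕ) + (p.2 : ℕ) + 2 + k = d + 1),
        blk A p.1 p.2) = Pc k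

/-- `L̂_t(λ) ⊗ I_n` (with `t = u+1`): first block column zero, remaining block columns
`L_{t-1}(λ) ⊗ I_n`; the column index is split as `Fin n ⊕ (Fin t × Fin n)`. -/
def LhatB (F : Type) [Field F] (u n : ℕ) :
    Matrix (Fin u × Fin n) (Fin n ⊕ Fin (u+1) × Fin n) (Polynomial F) :=
  Matrix.of fun p q =>
    match q with
    | Sum.inl _ => 0
    | Sum.inr c => (Lpen F u ⊗ₖ (1 : Matrix (Fin n) (Fin n) (Polynomial F))) p c

/-- The modified block Kronecker pencil `[[λB+A, L̂_t(λ)ᵀ⊗I_n],[σ L̂_t(λ)⊗I_n, 0]]`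
(with `t = u+1`). -/
def modBK (F : Type) [Field F] (u n : ℕ) (σ : F)
    (M : Matrix (Fin n ⊕ Fin (u+1) × Fin n) (Fin n ⊕ Fin (u+1) × Fin n) (Polynomial F)) :
    Matrix ((Fin n ⊕ Fin (u+1) × Fin n) ⊕ Fin u × Fin n)
      ((Fin n ⊕ Fin (u+1) × Fin n) ⊕ Fin u × Fin n) (Polynomial F) :=
  Matrix.fromBlocks M (LhatB F u n)ᵀ (σ • LhatB F u n) 0

/-- `Λ̂_t(λ) ⊗ I_n` (with `t = u+1`): the `(t+1)n × 2n` polynomial matrix whose transpose has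
block rows `(I_n, 0, …, 0)` and `(0, λ^{t-1}I_n, …, λ I_n, I_n)`. -/
def LamHatB (F : Type) [Field F] (u n : ℕ) :
    Matrix (Fin n ⊕ Fin (u+1) × Fin n) (Fin 2 × Fin n) (Polynomial F) :=
  Matrix.of fun q c =>
    match q with
    | Sum.inl r => if c.1 = 0 ∧ c.2 = r then 1 else 0
    | Sum.inr p => if c.1 = 1 ∧ c.2 = p.2 then (X : Polynomial F) ^ (u - (p.1 : ℕ)) else 0

/-- `Λ̃_t(λ) ⊗ I_n` (with `t = u+1`): the `(t+1)n × 2n` polynomial matrix whose transpose has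
block rows `(I_n, 0, …, 0)` and `(0, I_n, λ I_n, …, λ^{t-1} I_n)`. -/
def LamTildeB (F : Type) [Field F] (u n : ℕ) :
    Matrix (Fin n ⊕ Fin (u+1) × Fin n) (Fin 2 × Fin n) (Polynomial F) :=
  Matrix.of fun q c =>
    match q with
    | Sum.inl r => if c.1 = 0 ∧ c.2 = r then 1 else 0
    | Sum.inr p => if c.1 = 1 ∧ c.2 = p.2 then (X : Polynomial F) ^ (p.1 : ℕ) else 0

/-- A `2n × 2n` matrix assembled from four `n × n` blocks, indexed by `Fin 2 × Fin n`. -/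
def twoBlock {α : Type*} {n : ℕ} (W₁₁ W₁₂ W₂₁ W₂₂ : Matrix (Fin n) (Fin n) α) :
    Matrix (Fin 2 × Fin n) (Fin 2 × Fin n) α :=
  Matrix.of fun p q =>
    if p.1 = 0 then (if q.1 = 0 then W₁₁ p.2 q.2 else W₁₂ p.2 q.2)
    else (if q.1 = 0 then W₂₁ p.2 q.2 else W₂₂ p.2 q.2)

/-- `Λ_t(λ) ⊗ I_n` (with `t = u+1`), over the split row index `Fin n ⊕ (Fin t × Fin n)`:
block entries `λ^t I_n, λ^{t-1} I_n, …, λ I_n, I_n`. -/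
def LamFullB (F : Type) [Field F] (u n : ℕ) :
    Matrix (Fin n ⊕ Fin (u+1) × Fin n) (Fin n) (Polynomial F) :=
  Matrix.of fun q c =>
    match q with
    | Sum.inl r => if r = c then (X : Polynomial F) ^ (u + 1) else 0
    | Sum.inr p => if p.2 = c then (X : Polynomial F) ^ (u - (p.1 : ℕ)) else 0

/-- `N̂_t(λ) = Ĥ_t(λ) ⊗ I_n` (with `t = u+1`): `Ĥ_t ∈ F[λ]^{(t-1)×(t+1)}` has `(i,j)` entry
`λ^{i+1-j}` if `2 ≤ j ≤ i+1` and `0` otherwise. -/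
def NhatB (F : Type) [Field F] (u n : ℕ) :
    Matrix (Fin u × Fin n) (Fin n ⊕ Fin (u+1) × Fin n) (Polynomial F) :=
  Matrix.of fun p q =>
    match q with
    | Sum.inl _ => 0
    | Sum.inr c =>
        if (c.1 : ℕ) ≤ (p.1 : ℕ) ∧ p.2 = c.2 then
          (X : Polynomial F) ^ ((p.1 : ℕ) - (c.1 : ℕ)) else 0

end


noncomputable section BKDev

lemma BK.sum_ite_iff {α : Type*} [Fintype α] [DecidableEq α] {M : Type*} [AddCommMonoid M]
    (g : α → M) (a : α) (P : α → Prop) [DecidablePred P] (h : ∀ k, P k ↔ k = a) :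
    (∑ k, if P k then g k else 0) = g a := by
  rw [Finset.sum_congr rfl (fun k _ => if_congr (h k) rfl rfl), Finset.sum_ite_eq']
  simp

variable (F : Type) [Field F]

def BK.E0 (s : ℕ) : Matrix (Fin (s+1)) (Fin (s+1)) (Polynomial F) :=
  Matrix.of fun i j => if (i:ℕ) = 0 ∧ (j:ℕ) = 0 then 1 else 0

def BK.C0 (s : ℕ) : Matrix (Fin s) (Fin (s+1)) (Polynomial F) :=
  Matrix.of fun i j => if (j:ℕ) = (i:ℕ) + 1 then -1 else 0

def BK.Q0 (s : ℕ) : Matrix (Fin (s+1)) (Fin (s+1)) (Polynomial F) :=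
  Matrix.of fun i j => if (j:ℕ) = 0 then X ^ (s - (i:ℕ))
    else if (i:ℕ) + 1 ≤ (j:ℕ) then X ^ ((j:ℕ) - 1 - (i:ℕ)) else 0

def BK.Qi0 (s : ℕ) : Matrix (Fin (s+1)) (Fin (s+1)) (Polynomial F) :=
  Matrix.of fun i j => if (i:ℕ) = 0 then (if (j:ℕ) = s then 1 else 0)
    else if (j:ℕ) + 1 = (i:ℕ) then 1 else if (j:ℕ) = (i:ℕ) then -X else 0

def BK.J1 (s : ℕ) : Matrix (Fin (s+1)) (Fin (s+1)) (Polynomial F) :=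
  Matrix.of fun i j => if (i:ℕ) + (j:ℕ) = s then 1 else 0

def BK.Js (s : ℕ) : Matrix (Fin s) (Fin s) (Polynomial F) :=
  Matrix.of fun i j => if (i:ℕ) + (j:ℕ) + 1 = s then 1 else 0

namespace BK

variable {F} {s : ℕ}

lemma Qi0_mul_Q0 (s : ℕ) : Qi0 F s * Q0 F s = 1 := by
  refine Matrix.ext fun i j => ?_
  rw [Matrix.mul_apply]
  have target : (1 : Matrix (Fin (s+1)) (Fin (s+1)) (Polynomial F)) i j
      = if (i:ℕ) = (j:ℕ) then 1 else 0 := by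
    simp [Matrix.one_apply, Fin.ext_iff]
  by_cases hi : (i:ℕ) = 0
  · have split : ∀ k : Fin (s+1), Qi0 F s i k * Q0 F s k j
        = if k = Fin.last s then Q0 F s k j else 0 := by
      intro k
      simp only [Qi0, Matrix.of_apply, hi, if_true]
      by_cases hk : (k:ℕ) = s
      · have hkl : k = Fin.last s := by ext; simpa using hk
        simp [hkl, hk]
      · have hkl : k ≠ Fin.last s := by
          intro h; apply hk; rw [h]; simp
        simp [hk, hkl]
    rw [Finset.sum_congr rfl (fun k _ => split k), Finset.sum_ite_eq', target]
    simp only [Finset.mem_univ, if_true, Q0, Matrix.of_apply, Fin.val_last]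
    split_ifs <;> first | (exfalso; omega) | simp | omega
  · have ha : (i:ℕ) - 1 < s + 1 := by omega
    set a : Fin (s+1) := ⟨(i:ℕ)-1, ha⟩ with hadef
    have hav : (a:ℕ) = (i:ℕ) - 1 := rfl
    have split : ∀ k : Fin (s+1), Qi0 F s i k * Q0 F s k j
        = ((if k = a then (1:Polynomial F) else 0)
            + (if k = i then -X else 0)) * Q0 F s k j := by
      intro k
      congr 1
      simp only [Qi0, Matrix.of_apply, hi, if_false]
      by_cases h1 : (k:ℕ) + 1 = (i:ℕ)
      · have e1 : k = a := by simp only [Fin.ext_iff, hav]; omega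
        have e2 : ¬ (k = i) := by simp only [Fin.ext_iff]; omega
        rw [if_pos h1, if_pos e1, if_neg e2, add_zero]
      · by_cases h2 : (k:ℕ) = (i:ℕ)
        · have e1 : ¬ (k = a) := by simp only [Fin.ext_iff, hav]; omega
          have e2 : k = i := by simp only [Fin.ext_iff]; omega
          rw [if_neg h1, if_pos h2, if_neg e1, if_pos e2, zero_add]
        · have e1 : ¬ (k = a) := by simp only [Fin.ext_iff, hav]; omega
          have e2 : ¬ (k = i) := by simp only [Fin.ext_iff]; omega
          rw [if_neg h1, if_neg h2, if_neg e1, if_neg e2, add_zero]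
    rw [Finset.sum_congr rfl (fun k _ => split k)]
    simp only [add_mul, ite_mul, zero_mul, one_mul, Finset.sum_add_distrib,
      Finset.sum_ite_eq', Finset.mem_univ, if_true, target]
    have his : (i:ℕ) ≤ s := Fin.is_le i
    by_cases hj : (j:ℕ) = 0
    · have v1 : Q0 F s a j = X ^ (s - ((i:ℕ)-1)) := by simp only [↓reduceIte, Q0, Matrix.of_apply, hj, hav]
      have v2 : Q0 F s i j = X ^ (s - (i:ℕ)) := by simp only [↓reduceIte, Q0, Matrix.of_apply, hj]
      rw [v1, v2, if_neg (by omega : ¬ ((i:ℕ) = (j:ℕ))),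
        show s - ((i:ℕ)-1) = (s - (i:ℕ)) + 1 by omega, pow_succ]
      ring
    · by_cases h1 : (i:ℕ) + 1 ≤ (j:ℕ)
      · have v1 : Q0 F s a j = X ^ ((j:ℕ) - 1 - ((i:ℕ)-1)) := by
          simp only [↓reduceIte, Q0, Matrix.of_apply, hj, hav, show (i:ℕ) - 1 + 1 ≤ (j:ℕ) by omega]
        have v2 : Q0 F s i j = X ^ ((j:ℕ) - 1 - (i:ℕ)) := by simp only [↓reduceIte, Q0, Matrix.of_apply, hj, h1]
        rw [v1, v2, if_neg (by omega : ¬ ((i:ℕ) = (j:ℕ))),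
          show (j:ℕ) - 1 - ((i:ℕ)-1) = ((j:ℕ) - 1 - (i:ℕ)) + 1 by omega, pow_succ]
        ring
      · by_cases h2 : (i:ℕ) = (j:ℕ)
        · have v1 : Q0 F s a j = X ^ ((j:ℕ) - 1 - ((i:ℕ)-1)) := by
            simp only [↓reduceIte, Q0, Matrix.of_apply, hj, hav, show (i:ℕ) - 1 + 1 ≤ (j:ℕ) by omega]
          have v2 : Q0 F s i j = 0 := by simp only [↓reduceIte, Q0, Matrix.of_apply, hj, h1]
          rw [v1, v2, if_pos h2, show (j:ℕ) - 1 - ((i:ℕ)-1) = 0 by omega, pow_zero]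
          ring
        · have v1 : Q0 F s a j = 0 := by
            simp only [↓reduceIte, Q0, Matrix.of_apply, hj, hav, show ¬ ((i:ℕ) - 1 + 1 ≤ (j:ℕ)) by omega]
          have v2 : Q0 F s i j = 0 := by simp only [↓reduceIte, Q0, Matrix.of_apply, hj, h1]
          rw [v1, v2, if_neg h2]
          ring

lemma Q0_mul_Qi0 (s : ℕ) : Q0 F s * Qi0 F s = 1 :=
  mul_eq_one_comm.mp (Qi0_mul_Q0 s)

lemma Lpen_mul_Q0 (s : ℕ) : Lpen F s * Q0 F s = C0 F s := by
  refine Matrix.ext fun i j => ?_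
  rw [Matrix.mul_apply]
  have hia : (i:ℕ) < s + 1 := by omega
  have hib : (i:ℕ) + 1 < s + 1 := by omega
  set a : Fin (s+1) := ⟨(i:ℕ), hia⟩ with hadef
  set b : Fin (s+1) := ⟨(i:ℕ)+1, hib⟩ with hbdef
  have hav : (a:ℕ) = (i:ℕ) := rfl
  have hbv : (b:ℕ) = (i:ℕ)+1 := rfl
  have split : ∀ k : Fin (s+1), Lpen F s i k * Q0 F s k j
      = ((if k = a then (-1 : Polynomial F) else 0) + (if k = b then X else 0)) * Q0 F s k j := by
    intro k
    congr 1
    simp only [Lpen, Matrix.of_apply]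
    by_cases h1 : (k:ℕ) = (i:ℕ)
    · have e1 : k = a := by simp only [Fin.ext_iff, hav]; omega
      have e2 : ¬ (k = b) := by simp only [Fin.ext_iff, hbv]; omega
      rw [if_pos h1, if_pos e1, if_neg e2, add_zero]
    · by_cases h2 : (k:ℕ) = (i:ℕ) + 1
      · have e1 : ¬ (k = a) := by simp only [Fin.ext_iff, hav]; omega
        have e2 : k = b := by simp only [Fin.ext_iff, hbv]; omega
        rw [if_neg h1, if_pos h2, if_neg e1, if_pos e2, zero_add]
      · have e1 : ¬ (k = a) := by simp only [Fin.ext_iff, hav]; omega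
        have e2 : ¬ (k = b) := by simp only [Fin.ext_iff, hbv]; omega
        rw [if_neg h1, if_neg h2, if_neg e1, if_neg e2, add_zero]
  rw [Finset.sum_congr rfl (fun k _ => split k)]
  simp only [add_mul, ite_mul, zero_mul, Finset.sum_add_distrib,
    Finset.sum_ite_eq', Finset.mem_univ, if_true]
  have his : (i:ℕ) < s := i.isLt
  simp only [C0, Matrix.of_apply]
  by_cases hj : (j:ℕ) = 0
  · have v1 : Q0 F s a j = X ^ (s - (i:ℕ)) := by simp only [↓reduceIte, Q0, Matrix.of_apply, hj, hav]
    have v2 : Q0 F s b j = X ^ (s - ((i:ℕ)+1)) := by simp only [↓reduceIte, Q0, Matrix.of_apply, hj, hbv]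
    rw [v1, v2, if_neg (by omega : ¬ ((j:ℕ) = (i:ℕ)+1)),
      show s - (i:ℕ) = (s - ((i:ℕ)+1)) + 1 by omega, pow_succ]
    ring
  · by_cases h1 : (i:ℕ) + 2 ≤ (j:ℕ)
    · have v1 : Q0 F s a j = X ^ ((j:ℕ) - 1 - (i:ℕ)) := by
        simp only [↓reduceIte, Q0, Matrix.of_apply, hj, hav, show (i:ℕ) + 1 ≤ (j:ℕ) by omega]
      have v2 : Q0 F s b j = X ^ ((j:ℕ) - 1 - ((i:ℕ)+1)) := by
        simp only [↓reduceIte, Q0, Matrix.of_apply, hj, hbv, show (i:ℕ) + 1 + 1 ≤ (j:ℕ) by omega]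
      rw [v1, v2, if_neg (by omega : ¬ ((j:ℕ) = (i:ℕ)+1)),
        show (j:ℕ) - 1 - (i:ℕ) = ((j:ℕ) - 1 - ((i:ℕ)+1)) + 1 by omega, pow_succ]
      ring
    · by_cases h2 : (j:ℕ) = (i:ℕ) + 1
      · have v1 : Q0 F s a j = X ^ ((j:ℕ) - 1 - (i:ℕ)) := by
          simp only [↓reduceIte, Q0, Matrix.of_apply, hj, hav, show (i:ℕ) + 1 ≤ (j:ℕ) by omega]
        have v2 : Q0 F s b j = 0 := by
          simp only [↓reduceIte, Q0, Matrix.of_apply, hj, hbv, show ¬ ((i:ℕ) + 1 + 1 ≤ (j:ℕ)) by omega]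
        rw [v1, v2, if_pos h2, show (j:ℕ) - 1 - (i:ℕ) = 0 by omega, pow_zero]
        ring
      · have v1 : Q0 F s a j = 0 := by
          simp only [↓reduceIte, Q0, Matrix.of_apply, hj, hav, show ¬ ((i:ℕ) + 1 ≤ (j:ℕ)) by omega]
        have v2 : Q0 F s b j = 0 := by
          simp only [↓reduceIte, Q0, Matrix.of_apply, hj, hbv, show ¬ ((i:ℕ) + 1 + 1 ≤ (j:ℕ)) by omega]
        rw [v1, v2, if_neg h2]
        ring

lemma C0_mul_C0T (s : ℕ) : C0 F s * (C0 F s)ᵀ = 1 := by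
  refine Matrix.ext fun i j => ?_
  rw [Matrix.mul_apply]
  have hib : (i:ℕ) + 1 < s + 1 := by omega
  set b : Fin (s+1) := ⟨(i:ℕ)+1, hib⟩ with hbdef
  have hbv : (b:ℕ) = (i:ℕ)+1 := rfl
  have split : ∀ k : Fin (s+1), C0 F s i k * (C0 F s)ᵀ k j
      = (if k = b then (-1 : Polynomial F) else 0) * C0 F s j k := by
    intro k
    rw [Matrix.transpose_apply]
    congr 1
    simp only [C0, Matrix.of_apply]
    by_cases h1 : (k:ℕ) = (i:ℕ) + 1
    · have e1 : k = b := by simp only [Fin.ext_iff, hbv]; omega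
      rw [if_pos h1, if_pos e1]
    · have e1 : ¬ (k = b) := by simp only [Fin.ext_iff, hbv]; omega
      rw [if_neg h1, if_neg e1]
  rw [Finset.sum_congr rfl (fun k _ => split k)]
  simp only [ite_mul, zero_mul, Finset.sum_ite_eq', Finset.mem_univ, if_true]
  simp only [C0, Matrix.of_apply, hbv, Matrix.one_apply, Fin.ext_iff]
  by_cases hij : (i:ℕ) = (j:ℕ)
  · rw [if_pos (by omega : (i:ℕ)+1 = (j:ℕ)+1), if_pos hij]; ring
  · rw [if_neg (by omega : ¬ ((i:ℕ)+1 = (j:ℕ)+1)), if_neg hij]; ring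

lemma C0T_mul_C0 (s : ℕ) : (C0 F s)ᵀ * C0 F s = 1 - E0 F s := by
  refine Matrix.ext fun i j => ?_
  rw [Matrix.mul_apply]
  have target : (1 - E0 F s) i j
      = (if (i:ℕ) = (j:ℕ) then 1 else 0) - (if (i:ℕ) = 0 ∧ (j:ℕ) = 0 then 1 else 0) := by
    simp only [E0, Matrix.sub_apply, Matrix.one_apply, Matrix.of_apply, Fin.ext_iff]
  rw [target]
  by_cases hi : (i:ℕ) = 0
  · have hz : ∀ k : Fin s, (C0 F s)ᵀ i k * C0 F s k j = 0 := by
      intro k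
      rw [Matrix.transpose_apply]
      simp only [C0, Matrix.of_apply]
      rw [if_neg (by omega : ¬ ((i:ℕ) = (k:ℕ)+1)), zero_mul]
    rw [Finset.sum_congr rfl (fun k _ => hz k), Finset.sum_const_zero]
    by_cases hj : (j:ℕ) = 0
    · rw [if_pos (by omega), if_pos ⟨hi, hj⟩]; ring
    · rw [if_neg (by omega), if_neg (by tauto)]; ring
  · have hk0 : (i:ℕ) - 1 < s := by have := Fin.is_le i; omega
    set k0 : Fin s := ⟨(i:ℕ)-1, hk0⟩ with hk0def
    have hk0v : (k0:ℕ) = (i:ℕ)-1 := rfl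
    have split : ∀ k : Fin s, (C0 F s)ᵀ i k * C0 F s k j
        = if k = k0 then (-1 : Polynomial F) * C0 F s k0 j else 0 := by
      intro k
      rw [Matrix.transpose_apply]
      simp only [C0, Matrix.of_apply]
      by_cases h1 : (i:ℕ) = (k:ℕ) + 1
      · have e1 : k = k0 := by simp only [Fin.ext_iff, hk0v]; omega
        rw [if_pos h1, if_pos e1, e1]
      · have e1 : ¬ (k = k0) := by simp only [Fin.ext_iff, hk0v]; omega
        rw [if_neg h1, if_neg e1, zero_mul]
    rw [Finset.sum_congr rfl (fun k _ => split k), Finset.sum_ite_eq']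
    simp only [Finset.mem_univ, if_true, C0, Matrix.of_apply, hk0v]
    rw [if_neg (by tauto : ¬ ((i:ℕ) = 0 ∧ (j:ℕ) = 0))]
    by_cases hij : (i:ℕ) = (j:ℕ)
    · rw [if_pos (by omega : (j:ℕ) = (i:ℕ)-1+1), if_pos hij]; ring
    · rw [if_neg (by omega : ¬ ((j:ℕ) = (i:ℕ)-1+1)), if_neg hij]; ring

lemma E0_mul_C0T (s : ℕ) : E0 F s * (C0 F s)ᵀ = 0 := by
  refine Matrix.ext fun i j => ?_
  rw [Matrix.mul_apply]
  refine Finset.sum_eq_zero fun k _ => ?_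
  rw [Matrix.transpose_apply]
  simp only [E0, C0, Matrix.of_apply]
  split_ifs with h1 h2
  · exfalso; omega
  · ring
  · ring
  · ring

lemma C0_mul_E0 (s : ℕ) : C0 F s * E0 F s = 0 := by
  refine Matrix.ext fun i j => ?_
  rw [Matrix.mul_apply]
  refine Finset.sum_eq_zero fun k _ => ?_
  simp only [E0, C0, Matrix.of_apply]
  split_ifs with h1 h2
  · exfalso; omega
  · ring
  · ring
  · ring

lemma E0_mul_E0 (s : ℕ) : E0 F s * E0 F s = E0 F s := by
  refine Matrix.ext fun i j => ?_
  rw [Matrix.mul_apply]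
  have split : ∀ k : Fin (s+1), E0 F s i k * E0 F s k j
      = if k = (0 : Fin (s+1)) then (if (i:ℕ) = 0 ∧ (j:ℕ) = 0 then (1:Polynomial F) else 0) else 0 := by
    intro k
    simp only [E0, Matrix.of_apply]
    by_cases hk : (k:ℕ) = 0
    · have e1 : k = 0 := by simp only [Fin.ext_iff, Fin.val_zero]; omega
      rw [if_pos e1]
      by_cases hi : (i:ℕ) = 0
      · by_cases hj : (j:ℕ) = 0
        · rw [if_pos ⟨hi, hk⟩, if_pos ⟨hk, hj⟩, if_pos ⟨hi, hj⟩]; ring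
        · rw [if_pos ⟨hi, hk⟩, if_neg (show ¬ ((k:ℕ) = 0 ∧ (j:ℕ) = 0) by tauto),
          if_neg (show ¬ ((i:ℕ) = 0 ∧ (j:ℕ) = 0) by tauto)]; ring
      · rw [if_neg (show ¬ ((i:ℕ) = 0 ∧ (k:ℕ) = 0) by tauto),
          if_neg (show ¬ ((i:ℕ) = 0 ∧ (j:ℕ) = 0) by tauto)]; ring
    · have e1 : ¬ (k = 0) := by simp only [Fin.ext_iff, Fin.val_zero]; omega
      rw [if_neg e1, if_neg (by tauto : ¬ ((k:ℕ) = 0 ∧ (j:ℕ) = 0)), mul_zero]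
  rw [Finset.sum_congr rfl (fun k _ => split k), Finset.sum_ite_eq']
  simp [E0]

lemma J1_mul_apply {α : Type*} (s : ℕ) (M : Matrix (Fin (s+1)) α (Polynomial F))
    (i : Fin (s+1)) (j : α) :
    (J1 F s * M) i j = M ⟨s - (i:ℕ), by omega⟩ j := by
  rw [Matrix.mul_apply]
  have split : ∀ k : Fin (s+1), J1 F s i k * M k j
      = if k = (⟨s - (i:ℕ), by omega⟩ : Fin (s+1)) then M k j else 0 := by
    intro k
    simp only [J1, Matrix.of_apply]
    have hi : (i:ℕ) ≤ s := Fin.is_le i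
    by_cases h1 : (i:ℕ) + (k:ℕ) = s
    · have e1 : k = (⟨s - (i:ℕ), by omega⟩ : Fin (s+1)) := by simp only [Fin.ext_iff]; omega
      rw [if_pos h1, if_pos e1, one_mul]
    · have e1 : ¬ (k = (⟨s - (i:ℕ), by omega⟩ : Fin (s+1))) := by simp only [Fin.ext_iff]; omega
      rw [if_neg h1, if_neg e1, zero_mul]
  rw [Finset.sum_congr rfl (fun k _ => split k), Finset.sum_ite_eq']
  simp

lemma mul_J1_apply {α : Type*} (s : ℕ) (M : Matrix α (Fin (s+1)) (Polynomial F))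
    (i : α) (j : Fin (s+1)) :
    (M * J1 F s) i j = M i ⟨s - (j:ℕ), by omega⟩ := by
  rw [Matrix.mul_apply]
  have split : ∀ k : Fin (s+1), M i k * J1 F s k j
      = if k = (⟨s - (j:ℕ), by omega⟩ : Fin (s+1)) then M i k else 0 := by
    intro k
    simp only [J1, Matrix.of_apply]
    have hj : (j:ℕ) ≤ s := Fin.is_le j
    by_cases h1 : (k:ℕ) + (j:ℕ) = s
    · have e1 : k = (⟨s - (j:ℕ), by omega⟩ : Fin (s+1)) := by simp only [Fin.ext_iff]; omega
      rw [if_pos h1, if_pos e1, mul_one]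
    · have e1 : ¬ (k = (⟨s - (j:ℕ), by omega⟩ : Fin (s+1))) := by simp only [Fin.ext_iff]; omega
      rw [if_neg h1, if_neg e1, mul_zero]
  rw [Finset.sum_congr rfl (fun k _ => split k), Finset.sum_ite_eq']
  simp

lemma Js_mul_apply {α : Type*} (s : ℕ) (M : Matrix (Fin s) α (Polynomial F))
    (i : Fin s) (j : α) :
    (Js F s * M) i j = M ⟨s - 1 - (i:ℕ), by have := i.isLt; omega⟩ j := by
  rw [Matrix.mul_apply]
  have hi : (i:ℕ) < s := i.isLt
  have split : ∀ k : Fin s, Js F s i k * M k j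
      = if k = (⟨s - 1 - (i:ℕ), by omega⟩ : Fin s) then M k j else 0 := by
    intro k
    simp only [Js, Matrix.of_apply]
    by_cases h1 : (i:ℕ) + (k:ℕ) + 1 = s
    · have e1 : k = (⟨s - 1 - (i:ℕ), by omega⟩ : Fin s) := by simp only [Fin.ext_iff]; omega
      rw [if_pos h1, if_pos e1, one_mul]
    · have e1 : ¬ (k = (⟨s - 1 - (i:ℕ), by omega⟩ : Fin s)) := by
        simp only [Fin.ext_iff]; omega
      rw [if_neg h1, if_neg e1, zero_mul]
  rw [Finset.sum_congr rfl (fun k _ => split k), Finset.sum_ite_eq']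
  simp

lemma J1_mul_J1 (s : ℕ) : J1 F s * J1 F s = 1 := by
  refine Matrix.ext fun i j => ?_
  rw [J1_mul_apply]
  have hi : (i:ℕ) ≤ s := Fin.is_le i
  have hj : (j:ℕ) ≤ s := Fin.is_le j
  simp only [J1, Matrix.of_apply, Matrix.one_apply, Fin.ext_iff]
  by_cases h : (i:ℕ) = (j:ℕ)
  · rw [if_pos (by omega : s - (i:ℕ) + (j:ℕ) = s), if_pos h]
  · rw [if_neg (by omega : ¬ (s - (i:ℕ) + (j:ℕ) = s)), if_neg h]

lemma Js_mul_Js (s : ℕ) : Js F s * Js F s = 1 := by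
  refine Matrix.ext fun i j => ?_
  rw [Js_mul_apply]
  have hi : (i:ℕ) < s := i.isLt
  have hj : (j:ℕ) < s := j.isLt
  simp only [Js, Matrix.of_apply, Matrix.one_apply, Fin.ext_iff]
  by_cases h : (i:ℕ) = (j:ℕ)
  · rw [if_pos (by omega : s - 1 - (i:ℕ) + (j:ℕ) + 1 = s), if_pos h]
  · rw [if_neg (by omega : ¬ (s - 1 - (i:ℕ) + (j:ℕ) + 1 = s)), if_neg h]

lemma J1_transpose (s : ℕ) : (J1 F s)ᵀ = J1 F s := by
  refine Matrix.ext fun i j => ?_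
  simp only [Matrix.transpose_apply, J1, Matrix.of_apply]
  by_cases h : (i:ℕ) + (j:ℕ) = s
  · rw [if_pos (by omega), if_pos h]
  · rw [if_neg (by omega), if_neg h]

lemma Js_transpose (s : ℕ) : (Js F s)ᵀ = Js F s := by
  refine Matrix.ext fun i j => ?_
  simp only [Matrix.transpose_apply, Js, Matrix.of_apply]
  by_cases h : (i:ℕ) + (j:ℕ) + 1 = s
  · rw [if_pos (by omega), if_pos h]
  · rw [if_neg (by omega), if_neg h]

lemma reflect_one_X : reflect 1 (X : Polynomial F) = 1 := by
  have h : (X : Polynomial F) = C 1 * X ^ 1 := by simp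
  rw [h, reflect_C_mul_X_pow, revAt_le (by norm_num)]
  simp

lemma reflect_one_neg_one : reflect 1 (-1 : Polynomial F) = -X := by
  have h : (-1 : Polynomial F) = C (-1) * X ^ 0 := by simp
  rw [h, reflect_C_mul_X_pow, revAt_le (by norm_num)]
  simp

lemma rev_Lpen (s : ℕ) :
    (Lpen F s).map (fun q => reflect 1 q) = -(Js F s * Lpen F s * J1 F s) := by
  refine Matrix.ext fun i j => ?_
  rw [Matrix.map_apply, Matrix.neg_apply, Matrix.mul_assoc, Js_mul_apply, mul_J1_apply]
  have hi : (i:ℕ) < s := i.isLt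
  have hj : (j:ℕ) ≤ s := Fin.is_le j
  simp only [Lpen, Matrix.of_apply]
  by_cases h1 : (j:ℕ) = (i:ℕ)
  · rw [if_pos h1, if_neg (by omega : ¬ (s - (j:ℕ) = s - 1 - (i:ℕ))),
      if_pos (by omega : s - (j:ℕ) = s - 1 - (i:ℕ) + 1), reflect_one_neg_one]
  · by_cases h2 : (j:ℕ) = (i:ℕ) + 1
    · rw [if_neg h1, if_pos h2, if_pos (by omega : s - (j:ℕ) = s - 1 - (i:ℕ)), reflect_one_X]
      ring
    · rw [if_neg h1, if_neg h2, if_neg (by omega : ¬ (s - (j:ℕ) = s - 1 - (i:ℕ))),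
        if_neg (by omega : ¬ (s - (j:ℕ) = s - 1 - (i:ℕ) + 1)), reflect_zero]
      ring

/-! ### Kronecker lifts -/

section Lifts

variable (s n : ℕ)

def Qm : Matrix (Fin (s+1) × Fin n) (Fin (s+1) × Fin n) (Polynomial F) :=
  Q0 F s ⊗ₖ (1 : Matrix (Fin n) (Fin n) (Polynomial F))

def Qim : Matrix (Fin (s+1) × Fin n) (Fin (s+1) × Fin n) (Polynomial F) :=
  Qi0 F s ⊗ₖ (1 : Matrix (Fin n) (Fin n) (Polynomial F))

def Km : Matrix (Fin s × Fin n) (Fin (s+1) × Fin n) (Polynomial F) :=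
  Lpen F s ⊗ₖ (1 : Matrix (Fin n) (Fin n) (Polynomial F))

def Cm : Matrix (Fin s × Fin n) (Fin (s+1) × Fin n) (Polynomial F) :=
  C0 F s ⊗ₖ (1 : Matrix (Fin n) (Fin n) (Polynomial F))

def Em : Matrix (Fin (s+1) × Fin n) (Fin (s+1) × Fin n) (Polynomial F) :=
  E0 F s ⊗ₖ (1 : Matrix (Fin n) (Fin n) (Polynomial F))

def Jm : Matrix (Fin (s+1) × Fin n) (Fin (s+1) × Fin n) (Polynomial F) :=
  J1 F s ⊗ₖ (1 : Matrix (Fin n) (Fin n) (Polynomial F))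

def Jsm : Matrix (Fin s × Fin n) (Fin s × Fin n) (Polynomial F) :=
  Js F s ⊗ₖ (1 : Matrix (Fin n) (Fin n) (Polynomial F))

variable {s n}

lemma one_transpose : (1 : Matrix (Fin n) (Fin n) (Polynomial F))ᵀ = 1 :=
  Matrix.transpose_one

lemma Qim_mul_Qm : Qim (F:=F) s n * Qm (F:=F) s n = 1 := by
  rw [Qim, Qm, ← Matrix.mul_kronecker_mul, Qi0_mul_Q0, Matrix.one_mul,
    Matrix.one_kronecker_one]

lemma Qm_mul_Qim : Qm (F:=F) s n * Qim (F:=F) s n = 1 := by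
  rw [Qm, Qim, ← Matrix.mul_kronecker_mul, Q0_mul_Qi0, Matrix.one_mul,
    Matrix.one_kronecker_one]

lemma Km_mul_Qm : Km (F:=F) s n * Qm (F:=F) s n = Cm (F:=F) s n := by
  rw [Km, Qm, Cm, ← Matrix.mul_kronecker_mul, Lpen_mul_Q0, Matrix.one_mul]

lemma Cm_transpose : (Cm (F:=F) s n)ᵀ = (C0 F s)ᵀ ⊗ₖ (1 : Matrix (Fin n) (Fin n) (Polynomial F)) := by
  rw [Cm, ← Matrix.kroneckerMap_transpose, Matrix.transpose_one]

lemma sub_kron {a b : ℕ} (A B : Matrix (Fin a) (Fin a) (Polynomial F))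
    (C : Matrix (Fin b) (Fin b) (Polynomial F)) :
    (A - B) ⊗ₖ C = A ⊗ₖ C - B ⊗ₖ C := by
  refine Matrix.ext fun i j => ?_
  simp only [Matrix.kroneckerMap_apply, Matrix.sub_apply, sub_mul]

lemma Cm_mul_CmT : Cm (F:=F) s n * (Cm (F:=F) s n)ᵀ = 1 := by
  rw [Cm_transpose, Cm, ← Matrix.mul_kronecker_mul, C0_mul_C0T, Matrix.one_mul,
    Matrix.one_kronecker_one]

lemma CmT_mul_Cm : (Cm (F:=F) s n)ᵀ * Cm (F:=F) s n = 1 - Em (F:=F) s n := by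
  rw [Cm_transpose, Cm, ← Matrix.mul_kronecker_mul, C0T_mul_C0, Matrix.one_mul, Em]
  rw [sub_kron, Matrix.one_kronecker_one]

lemma Em_mul_CmT : Em (F:=F) s n * (Cm (F:=F) s n)ᵀ = 0 := by
  rw [Cm_transpose, Em, ← Matrix.mul_kronecker_mul, E0_mul_C0T, Matrix.one_mul,
    Matrix.zero_kronecker]

lemma Cm_mul_Em : Cm (F:=F) s n * Em (F:=F) s n = 0 := by
  rw [Cm, Em, ← Matrix.mul_kronecker_mul, C0_mul_E0, Matrix.one_mul, Matrix.zero_kronecker]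

lemma Em_mul_Em : Em (F:=F) s n * Em (F:=F) s n = Em (F:=F) s n := by
  rw [Em, ← Matrix.mul_kronecker_mul, E0_mul_E0, Matrix.one_mul]

lemma Jm_mul_Jm : Jm (F:=F) s n * Jm (F:=F) s n = 1 := by
  rw [Jm, ← Matrix.mul_kronecker_mul, J1_mul_J1, Matrix.one_mul, Matrix.one_kronecker_one]

lemma Jsm_mul_Jsm : Jsm (F:=F) s n * Jsm (F:=F) s n = 1 := by
  rw [Jsm, ← Matrix.mul_kronecker_mul, Js_mul_Js, Matrix.one_mul, Matrix.one_kronecker_one]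

lemma Jm_transpose : (Jm (F:=F) s n)ᵀ = Jm s n := by
  rw [Jm, ← Matrix.kroneckerMap_transpose, Matrix.transpose_one, J1_transpose]

lemma Jsm_transpose : (Jsm (F:=F) s n)ᵀ = Jsm s n := by
  rw [Jsm, ← Matrix.kroneckerMap_transpose, Matrix.transpose_one, Js_transpose]

end Lifts

/-! ### The clearing step -/

section Clearing

variable {s n : ℕ} (M : Matrix (Fin (s+1) × Fin n) (Fin (s+1) × Fin n) (Polynomial F))

def PP : Matrix (Fin n) (Fin n) (Polynomial F) := (Lam F s n)ᵀ * M * Lam F s n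

def Phat : Matrix (Fin (s+1) × Fin n) (Fin (s+1) × Fin n) (Polynomial F) :=
  Matrix.of fun a b => if (a.1:ℕ) = 0 ∧ (b.1:ℕ) = 0 then PP M a.2 b.2 else 0

def Nn : Matrix (Fin (s+1) × Fin n) (Fin (s+1) × Fin n) (Polynomial F) :=
  (Qm s n)ᵀ * M * Qm s n

def Dd : Matrix (Fin (s+1) × Fin n) (Fin (s+1) × Fin n) (Polynomial F) :=
  Phat M - Nn M

variable (σ : F)

def Ym : Matrix (Fin (s+1) × Fin n) (Fin s × Fin n) (Polynomial F) :=
  Matrix.of fun a k => -(C σ⁻¹ * Dd M a (k.1.succ, k.2))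

def Wm : Matrix (Fin s × Fin n) (Fin (s+1) × Fin n) (Polynomial F) :=
  Matrix.of fun k b => if (b.1:ℕ) = 0 then -(Dd M (k.1.succ, k.2) b) else 0

lemma Qm_col0 (a : Fin (s+1) × Fin n) (r : Fin n) :
    Qm (F:=F) s n a ((0 : Fin (s+1)), r) = Lam F s n a r := by
  simp only [Qm, Matrix.kroneckerMap_apply, Q0, Lam, Matrix.of_apply, Matrix.one_apply,
    Fin.val_zero, if_true, mul_ite, mul_one, mul_zero]

lemma Nn_00 (r c : Fin n) :
    Nn (F:=F) M ((0 : Fin (s+1)), r) ((0 : Fin (s+1)), c) = PP M r c := by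
  rw [Nn, PP, Matrix.mul_apply, Matrix.mul_apply]
  refine Finset.sum_congr rfl fun b _ => ?_
  rw [Qm_col0, Matrix.mul_apply, Matrix.mul_apply]
  congr 1
  refine Finset.sum_congr rfl fun a _ => ?_
  rw [Matrix.transpose_apply, Matrix.transpose_apply, Qm_col0]

variable {σ}

lemma YC_apply (hσ : σ ≠ 0) (a b : Fin (s+1) × Fin n) :
    (Ym M σ * (σ • Cm (F:=F) s n)) a b = if (b.1:ℕ) = 0 then 0 else Dd M a b := by
  rw [Matrix.mul_apply, Fintype.sum_prod_type]
  have inner : ∀ k : Fin s,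
      (∑ t : Fin n, Ym M σ a (k, t) * (σ • Cm (F:=F) s n) (k, t) b)
        = if (b.1:ℕ) = (k:ℕ) + 1 then Ym M σ a (k, b.2) * (σ • (-1 : Polynomial F)) else 0 := by
    intro k
    have term : ∀ t : Fin n, Ym M σ a (k, t) * (σ • Cm (F:=F) s n) (k, t) b
        = if t = b.2 then (if (b.1:ℕ) = (k:ℕ) + 1 then Ym M σ a (k, t) * (σ • (-1 : Polynomial F)) else 0) else 0 := by
      intro t
      rw [Matrix.smul_apply, Cm, Matrix.kroneckerMap_apply]
      simp only [C0, Matrix.of_apply, Matrix.one_apply]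
      by_cases ht : t = b.2
      · by_cases hb : (b.1:ℕ) = (k:ℕ) + 1
        · simp [ht, hb]
        · simp [ht, hb]
      · simp [ht]
    rw [Finset.sum_congr rfl fun t _ => term t, Finset.sum_ite_eq']
    simp
  rw [Finset.sum_congr rfl fun k _ => inner k]
  by_cases hb : (b.1:ℕ) = 0
  · rw [if_pos hb]
    refine Finset.sum_eq_zero fun k _ => ?_
    rw [if_neg (by omega)]
  · rw [if_neg hb]
    have hbl : (b.1:ℕ) - 1 < s := by have := Fin.is_le b.1; omega
    have key : ∀ k : Fin s, ((b.1:ℕ) = (k:ℕ) + 1) ↔ k = (⟨(b.1:ℕ) - 1, hbl⟩ : Fin s) := by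
      intro k; simp only [Fin.ext_iff]; omega
    rw [sum_ite_iff _ _ _ key]
    have hsucc : ((⟨(b.1:ℕ) - 1, hbl⟩ : Fin s).succ, b.2) = b := by
      refine Prod.ext ?_ rfl
      simp only [Fin.ext_iff, Fin.val_succ]; omega
    rw [Ym, Matrix.of_apply, hsucc, smul_eq_C_mul]
    calc -(C σ⁻¹ * Dd M a b) * (C σ * (-1)) = (C σ⁻¹ * C σ) * Dd M a b := by ring
    _ = Dd M a b := by rw [← C_mul, inv_mul_cancel₀ hσ, C_1, one_mul]

lemma CW_apply (a b : Fin (s+1) × Fin n) :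
    ((Cm (F:=F) s n)ᵀ * Wm M) a b
      = if (a.1:ℕ) = 0 then 0 else (if (b.1:ℕ) = 0 then Dd M a b else 0) := by
  rw [Matrix.mul_apply, Fintype.sum_prod_type]
  have inner : ∀ k : Fin s,
      (∑ t : Fin n, (Cm (F:=F) s n)ᵀ a (k, t) * Wm M (k, t) b)
        = if (a.1:ℕ) = (k:ℕ) + 1 then -Wm M (k, a.2) b else 0 := by
    intro k
    have term : ∀ t : Fin n, (Cm (F:=F) s n)ᵀ a (k, t) * Wm M (k, t) b
        = if t = a.2 then (if (a.1:ℕ) = (k:ℕ) + 1 then -Wm M (k, t) b else 0) else 0 := by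
      intro t
      rw [Matrix.transpose_apply, Cm, Matrix.kroneckerMap_apply]
      simp only [C0, Matrix.of_apply, Matrix.one_apply]
      by_cases ht : t = a.2
      · by_cases ha : (a.1:ℕ) = (k:ℕ) + 1
        · simp [ht, ha]
        · simp [ht, ha]
      · simp [ht]
    rw [Finset.sum_congr rfl fun t _ => term t, Finset.sum_ite_eq']
    simp
  rw [Finset.sum_congr rfl fun k _ => inner k]
  by_cases ha : (a.1:ℕ) = 0
  · rw [if_pos ha]
    refine Finset.sum_eq_zero fun k _ => ?_
    rw [if_neg (by omega)]
  · rw [if_neg ha]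
    have hal : (a.1:ℕ) - 1 < s := by have := Fin.is_le a.1; omega
    have key : ∀ k : Fin s, ((a.1:ℕ) = (k:ℕ) + 1) ↔ k = (⟨(a.1:ℕ) - 1, hal⟩ : Fin s) := by
      intro k; simp only [Fin.ext_iff]; omega
    rw [sum_ite_iff _ _ _ key]
    have hsucc : ((⟨(a.1:ℕ) - 1, hal⟩ : Fin s).succ, a.2) = a := by
      refine Prod.ext ?_ rfl
      simp only [Fin.ext_iff, Fin.val_succ]; omega
    rw [Wm, Matrix.of_apply, hsucc]
    by_cases hb : (b.1:ℕ) = 0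
    · rw [if_pos hb, if_pos hb, neg_neg]
    · rw [if_neg hb, if_neg hb, neg_zero]

lemma clearing (hσ : σ ≠ 0) :
    Nn M + Ym M σ * (σ • Cm (F:=F) s n) + (Cm (F:=F) s n)ᵀ * Wm M = Phat M := by
  refine Matrix.ext fun a b => ?_
  rw [Matrix.add_apply, Matrix.add_apply, YC_apply M hσ, CW_apply]
  have hD : Dd M a b = Phat M a b - Nn M a b := by rw [Dd, Matrix.sub_apply]
  by_cases hb : (b.1:ℕ) = 0
  · rw [if_pos hb, if_pos hb]
    by_cases ha : (a.1:ℕ) = 0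
    · rw [if_pos ha, add_zero, add_zero]
      obtain ⟨a1, a2⟩ := a
      obtain ⟨b1, b2⟩ := b
      have ha1 : a1 = 0 := by simp only [Fin.ext_iff]; exact ha
      have hb1 : b1 = 0 := by simp only [Fin.ext_iff]; exact hb
      subst ha1; subst hb1
      rw [Nn_00, Phat, Matrix.of_apply, if_pos ⟨rfl, rfl⟩]
    · rw [if_neg ha, hD]; ring
  · rw [if_neg hb, if_neg hb, hD]
    by_cases ha : (a.1:ℕ) = 0
    · rw [if_pos ha]; ring
    · rw [if_neg ha]; ring

lemma Phat_mul_Em : Phat (F:=F) M * Em (F:=F) s n = Phat M := by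
  refine Matrix.ext fun a b => ?_
  rw [Matrix.mul_apply, Fintype.sum_prod_type]
  have inner : ∀ k : Fin (s+1),
      (∑ t : Fin n, Phat M a (k, t) * Em (F:=F) s n (k, t) b)
        = if (k:ℕ) = 0 ∧ (b.1:ℕ) = 0 then Phat M a (k, b.2) else 0 := by
    intro k
    have term : ∀ t : Fin n, Phat M a (k, t) * Em (F:=F) s n (k, t) b
        = if t = b.2 then (if (k:ℕ) = 0 ∧ (b.1:ℕ) = 0 then Phat M a (k, t) else 0) else 0 := by
      intro t
      rw [Em, Matrix.kroneckerMap_apply]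
      simp only [E0, Matrix.of_apply, Matrix.one_apply]
      by_cases ht : t = b.2
      · by_cases hk : (k:ℕ) = 0 ∧ (b.1:ℕ) = 0
        · simp [ht, hk]
        · simp [ht, hk]
      · simp [ht]
    rw [Finset.sum_congr rfl fun t _ => term t, Finset.sum_ite_eq']
    simp
  rw [Finset.sum_congr rfl fun k _ => inner k]
  by_cases hb : (b.1:ℕ) = 0
  · have key : ∀ k : Fin (s+1), ((k:ℕ) = 0 ∧ (b.1:ℕ) = 0) ↔ k = (0 : Fin (s+1)) := by
      intro k; simp only [Fin.ext_iff, Fin.val_zero]; omega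
    rw [sum_ite_iff _ _ _ key]
    obtain ⟨b1, b2⟩ := b
    have hb1 : b1 = 0 := by simp only [Fin.ext_iff]; exact hb
    subst hb1
    rfl
  · have key : ∀ k : Fin (s+1), ¬ ((k:ℕ) = 0 ∧ (b.1:ℕ) = 0) := by tauto
    rw [Finset.sum_congr rfl fun k _ => if_neg (key k), Finset.sum_const_zero,
      Phat, Matrix.of_apply, if_neg (by tauto)]

lemma Phat_mul_CmT : Phat (F:=F) M * (Cm (F:=F) s n)ᵀ = 0 := by
  refine Matrix.ext fun a b => ?_
  rw [Matrix.mul_apply, Matrix.zero_apply]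
  refine Finset.sum_eq_zero fun k _ => ?_
  rw [Matrix.transpose_apply, Cm, Matrix.kroneckerMap_apply]
  simp only [Phat, C0, Matrix.of_apply]
  by_cases h1 : (a.1:ℕ) = 0 ∧ (k.1:ℕ) = 0
  · rw [if_neg (show ¬ ((k.1:ℕ) = (b.1:ℕ) + 1) by omega), zero_mul, mul_zero]
  · rw [if_neg h1, zero_mul]

end Clearing

/-! ### The key linearization lemma -/

section Key

variable {s n : ℕ}

lemma mul_inv_pair {β : Type*} [Fintype β] [DecidableEq β]
    {A Ai B Bi : Matrix β β (Polynomial F)} (hA : A * Ai = 1) (hB : B * Bi = 1) :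
    (A * B) * (Bi * Ai) = 1 := by
  rw [Matrix.mul_assoc, ← Matrix.mul_assoc B Bi Ai, hB, Matrix.one_mul, hA]

theorem key (σ : F) (hσ : σ ≠ 0)
    (M : Matrix (Fin (s+1) × Fin n) (Fin (s+1) × Fin n) (Polynomial F)) :
    IsLinearization (2*s*n) (blockKron F s n σ M) ((Lam F s n)ᵀ * M * Lam F s n) := by
  classical
  -- the distinguished predicate: membership in the leading block column
  set p : ((Fin (s+1) × Fin n) ⊕ (Fin s × Fin n)) → Prop :=
    fun a => ∃ r : Fin n, a = Sum.inl ((0 : Fin (s+1)), r) with hp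
  -- the equivalence
  have hg : Function.Bijective
      (fun r : Fin n => (⟨Sum.inl ((0 : Fin (s+1)), r), ⟨r, rfl⟩⟩ : {a // p a})) := by
    constructor
    · intro r r' h
      have h2 := congrArg Subtype.val h
      simpa using h2
    · rintro ⟨a, r, rfl⟩
      exact ⟨r, rfl⟩
  let eP : Fin n ≃ {a // p a} := Equiv.ofBijective _ hg
  have hcardP : Fintype.card {a // p a} = n :=
    (Fintype.card_congr eP.symm).trans (Fintype.card_fin n)
  have hcard : Fintype.card {a // ¬ p a} = 2*s*n := by
    rw [Fintype.card_subtype_compl, hcardP]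
    have h2 : Fintype.card ((Fin (s+1) × Fin n) ⊕ (Fin s × Fin n)) = (s+1)*n + s*n := by
      simp
    rw [h2]
    have h3 : (s+1)*n = s*n + n := by ring
    have h4 : 2*s*n = s*n + s*n := by ring
    omega
  let eC : Fin (2*s*n) ≃ {a // ¬ p a} := (Fintype.equivFinOfCardEq hcard).symm
  let e : (Fin (2*s*n) ⊕ Fin n) ≃ ((Fin (s+1) × Fin n) ⊕ (Fin s × Fin n)) :=
    (Equiv.sumComm (Fin (2*s*n)) (Fin n)).trans
      ((Equiv.sumCongr eP eC).trans (Equiv.sumCompl p))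
  have he_inr : ∀ r : Fin n, e (Sum.inr r) = Sum.inl ((0 : Fin (s+1)), r) := fun r => rfl
  have he_inl : ∀ k, ¬ p (e (Sum.inl k)) := fun k => (eC k).2
  -- the matrices
  set V3 : Matrix _ _ (Polynomial F) :=
    Matrix.fromBlocks (Em (F:=F) s n) (σ⁻¹ • (Cm (F:=F) s n)ᵀ) (Cm (F:=F) s n) 0 with hV3def
  set V3i : Matrix _ _ (Polynomial F) :=
    Matrix.fromBlocks (Em (F:=F) s n) (Cm (F:=F) s n)ᵀ (σ • Cm (F:=F) s n) 0 with hV3idef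
  -- inverses of elementary blocks
  have hQb : Matrix.fromBlocks (Qm (F:=F) s n) 0 0 (1 : Matrix (Fin s × Fin n) (Fin s × Fin n) (Polynomial F))
      * Matrix.fromBlocks (Qim (F:=F) s n) 0 0 1 = 1 := by
    rw [Matrix.fromBlocks_multiply]
    simp only [Matrix.mul_zero, Matrix.zero_mul, Matrix.mul_one, Matrix.one_mul,
      add_zero, zero_add, Qm_mul_Qim]
    exact Matrix.fromBlocks_one
  have hQbT : Matrix.fromBlocks (Qm (F:=F) s n)ᵀ 0 0 (1 : Matrix (Fin s × Fin n) (Fin s × Fin n) (Polynomial F))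
      * Matrix.fromBlocks (Qim (F:=F) s n)ᵀ 0 0 1 = 1 := by
    rw [Matrix.fromBlocks_multiply]
    simp only [Matrix.mul_zero, Matrix.zero_mul, Matrix.mul_one, Matrix.one_mul,
      add_zero, zero_add]
    rw [← Matrix.transpose_mul, Qim_mul_Qm, Matrix.transpose_one]
    exact Matrix.fromBlocks_one
  have hYb : Matrix.fromBlocks (1 : Matrix (Fin (s+1) × Fin n) (Fin (s+1) × Fin n) (Polynomial F)) (Ym M σ) 0 (1 : Matrix (Fin s × Fin n) (Fin s × Fin n) (Polynomial F))
      * Matrix.fromBlocks (1 : Matrix (Fin (s+1) × Fin n) (Fin (s+1) × Fin n) (Polynomial F)) (-(Ym M σ)) 0 (1 : Matrix (Fin s × Fin n) (Fin s × Fin n) (Polynomial F)) = 1 := by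
    rw [Matrix.fromBlocks_multiply]
    simp only [Matrix.mul_zero, Matrix.zero_mul, Matrix.mul_one, Matrix.one_mul,
      add_zero, zero_add, Matrix.mul_neg, Matrix.neg_mul, neg_zero,
      neg_add_cancel, add_neg_cancel]
    exact Matrix.fromBlocks_one
  have hWb : Matrix.fromBlocks (1 : Matrix (Fin (s+1) × Fin n) (Fin (s+1) × Fin n) (Polynomial F)) 0 (Wm M) (1 : Matrix (Fin s × Fin n) (Fin s × Fin n) (Polynomial F))
      * Matrix.fromBlocks (1 : Matrix (Fin (s+1) × Fin n) (Fin (s+1) × Fin n) (Polynomial F)) 0 (-(Wm M)) (1 : Matrix (Fin s × Fin n) (Fin s × Fin n) (Polynomial F)) = 1 := by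
    rw [Matrix.fromBlocks_multiply]
    simp only [Matrix.mul_zero, Matrix.zero_mul, Matrix.mul_one, Matrix.one_mul,
      add_zero, zero_add, Matrix.mul_neg, Matrix.neg_mul, neg_zero,
      neg_add_cancel, add_neg_cancel]
    exact Matrix.fromBlocks_one
  have hEm1 : Em (F:=F) s n + ((1 : Matrix (Fin (s+1) × Fin n) (Fin (s+1) × Fin n) (Polynomial F)) - Em (F:=F) s n) = 1 := by
    abel
  have hV3b : V3 * V3i = 1 := by
    rw [hV3def, hV3idef, Matrix.fromBlocks_multiply]
    simp only [Matrix.smul_mul, Matrix.mul_smul, smul_smul, Matrix.mul_zero, Matrix.zero_mul,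
      smul_zero, add_zero, zero_add, Em_mul_Em, Em_mul_CmT, Cm_mul_Em, Cm_mul_CmT,
      CmT_mul_Cm, inv_mul_cancel₀ hσ, mul_inv_cancel₀ hσ, one_smul]
    rw [hEm1]
    exact Matrix.fromBlocks_one
  -- the unimodular factors
  set U : Matrix _ _ (Polynomial F) :=
    Matrix.fromBlocks (1 : Matrix (Fin (s+1) × Fin n) (Fin (s+1) × Fin n) (Polynomial F)) (Ym M σ) 0 (1 : Matrix (Fin s × Fin n) (Fin s × Fin n) (Polynomial F)) * Matrix.fromBlocks (Qm (F:=F) s n)ᵀ 0 0 (1 : Matrix (Fin s × Fin n) (Fin s × Fin n) (Polynomial F)) with hU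
  set Ui : Matrix _ _ (Polynomial F) :=
    Matrix.fromBlocks (Qim (F:=F) s n)ᵀ 0 0 (1 : Matrix (Fin s × Fin n) (Fin s × Fin n) (Polynomial F)) * Matrix.fromBlocks (1 : Matrix (Fin (s+1) × Fin n) (Fin (s+1) × Fin n) (Polynomial F)) (-(Ym M σ)) 0 (1 : Matrix (Fin s × Fin n) (Fin s × Fin n) (Polynomial F)) with hUi
  set V : Matrix _ _ (Polynomial F) :=
    (Matrix.fromBlocks (Qm (F:=F) s n) 0 0 (1 : Matrix (Fin s × Fin n) (Fin s × Fin n) (Polynomial F)) * Matrix.fromBlocks (1 : Matrix (Fin (s+1) × Fin n) (Fin (s+1) × Fin n) (Polynomial F)) 0 (Wm M) (1 : Matrix (Fin s × Fin n) (Fin s × Fin n) (Polynomial F))) * V3 with hV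
  set Vi : Matrix _ _ (Polynomial F) :=
    V3i * (Matrix.fromBlocks (1 : Matrix (Fin (s+1) × Fin n) (Fin (s+1) × Fin n) (Polynomial F)) 0 (-(Wm M)) (1 : Matrix (Fin s × Fin n) (Fin s × Fin n) (Polynomial F)) * Matrix.fromBlocks (Qim (F:=F) s n) 0 0 (1 : Matrix (Fin s × Fin n) (Fin s × Fin n) (Polynomial F))) with hVi
  have hUUi : U * Ui = 1 := by
    rw [hU, hUi]
    calc Matrix.fromBlocks (1 : Matrix (Fin (s+1) × Fin n) (Fin (s+1) × Fin n) (Polynomial F)) (Ym M σ) 0 (1 : Matrix (Fin s × Fin n) (Fin s × Fin n) (Polynomial F)) * Matrix.fromBlocks (Qm (F:=F) s n)ᵀ 0 0 (1 : Matrix (Fin s × Fin n) (Fin s × Fin n) (Polynomial F))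
        * (Matrix.fromBlocks (Qim (F:=F) s n)ᵀ 0 0 (1 : Matrix (Fin s × Fin n) (Fin s × Fin n) (Polynomial F)) * Matrix.fromBlocks (1 : Matrix (Fin (s+1) × Fin n) (Fin (s+1) × Fin n) (Polynomial F)) (-(Ym M σ)) 0 (1 : Matrix (Fin s × Fin n) (Fin s × Fin n) (Polynomial F)))
        = Matrix.fromBlocks (1 : Matrix (Fin (s+1) × Fin n) (Fin (s+1) × Fin n) (Polynomial F)) (Ym M σ) 0 (1 : Matrix (Fin s × Fin n) (Fin s × Fin n) (Polynomial F))
          * (Matrix.fromBlocks (Qm (F:=F) s n)ᵀ 0 0 (1 : Matrix (Fin s × Fin n) (Fin s × Fin n) (Polynomial F)) * Matrix.fromBlocks (Qim (F:=F) s n)ᵀ 0 0 (1 : Matrix (Fin s × Fin n) (Fin s × Fin n) (Polynomial F)))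
          * Matrix.fromBlocks (1 : Matrix (Fin (s+1) × Fin n) (Fin (s+1) × Fin n) (Polynomial F)) (-(Ym M σ)) 0 (1 : Matrix (Fin s × Fin n) (Fin s × Fin n) (Polynomial F)) := by
          simp only [Matrix.mul_assoc]
    _ = 1 := by rw [hQbT, Matrix.mul_one, hYb]
  have hVVi : V * Vi = 1 := by
    rw [hV, hVi]
    exact mul_inv_pair (mul_inv_pair hQb hWb) hV3b
  -- the central computation
  have step0 : Matrix.fromBlocks (Qm (F:=F) s n)ᵀ 0 0 (1 : Matrix (Fin s × Fin n) (Fin s × Fin n) (Polynomial F)) * blockKron F s n σ M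
      * Matrix.fromBlocks (Qm (F:=F) s n) 0 0 (1 : Matrix (Fin s × Fin n) (Fin s × Fin n) (Polynomial F))
      = Matrix.fromBlocks (Nn M) (Cm (F:=F) s n)ᵀ (σ • Cm (F:=F) s n) 0 := by
    have hBK : blockKron F s n σ M
        = Matrix.fromBlocks M (Km (F:=F) s n)ᵀ (σ • Km (F:=F) s n) 0 := rfl
    rw [hBK, Matrix.fromBlocks_multiply, Matrix.fromBlocks_multiply]
    simp only [Matrix.mul_zero, Matrix.zero_mul, Matrix.mul_one, Matrix.one_mul,
      add_zero, zero_add, Matrix.smul_mul]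
    rw [← Matrix.transpose_mul, Km_mul_Qm, Nn]
  have step1 : Matrix.fromBlocks (1 : Matrix (Fin (s+1) × Fin n) (Fin (s+1) × Fin n) (Polynomial F)) (Ym M σ) 0 (1 : Matrix (Fin s × Fin n) (Fin s × Fin n) (Polynomial F))
      * Matrix.fromBlocks (Nn M) (Cm (F:=F) s n)ᵀ (σ • Cm (F:=F) s n) 0
      * Matrix.fromBlocks (1 : Matrix (Fin (s+1) × Fin n) (Fin (s+1) × Fin n) (Polynomial F)) 0 (Wm M) (1 : Matrix (Fin s × Fin n) (Fin s × Fin n) (Polynomial F))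
      = Matrix.fromBlocks (Phat M) (Cm (F:=F) s n)ᵀ (σ • Cm (F:=F) s n) 0 := by
    rw [Matrix.fromBlocks_multiply, Matrix.fromBlocks_multiply]
    simp only [Matrix.mul_zero, Matrix.zero_mul, Matrix.mul_one, Matrix.one_mul,
      add_zero, zero_add]
    rw [clearing M hσ]
  have step2 : Matrix.fromBlocks (Phat M) (Cm (F:=F) s n)ᵀ (σ • Cm (F:=F) s n) 0 * V3
      = Matrix.fromBlocks (Phat M
          + ((1 : Matrix (Fin (s+1) × Fin n) (Fin (s+1) × Fin n) (Polynomial F))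
              - Em (F:=F) s n)) 0 0 1 := by
    rw [hV3def, Matrix.fromBlocks_multiply]
    simp only [Matrix.smul_mul, Matrix.mul_smul, smul_smul, Matrix.mul_zero, Matrix.zero_mul,
      smul_zero, add_zero, zero_add, Phat_mul_Em, Phat_mul_CmT, Cm_mul_Em, Cm_mul_CmT,
      CmT_mul_Cm, mul_inv_cancel₀ hσ, inv_mul_cancel₀ hσ, one_smul]
  have hstep0' : ∀ X : Matrix ((Fin (s+1) × Fin n) ⊕ (Fin s × Fin n))
      ((Fin (s+1) × Fin n) ⊕ (Fin s × Fin n)) (Polynomial F),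
      Matrix.fromBlocks (Qm (F:=F) s n)ᵀ 0 0 (1 : Matrix (Fin s × Fin n) (Fin s × Fin n) (Polynomial F))
        * (blockKron F s n σ M * (Matrix.fromBlocks (Qm (F:=F) s n) 0 0 (1 : Matrix (Fin s × Fin n) (Fin s × Fin n) (Polynomial F)) * X))
      = Matrix.fromBlocks (Nn M) (Cm (F:=F) s n)ᵀ (σ • Cm (F:=F) s n) 0 * X := by
    intro X
    rw [← Matrix.mul_assoc, ← Matrix.mul_assoc, step0]
  have hProd : U * blockKron F s n σ M * V
      = Matrix.fromBlocks (Phat M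
          + ((1 : Matrix (Fin (s+1) × Fin n) (Fin (s+1) × Fin n) (Polynomial F))
              - Em (F:=F) s n)) 0 0 1 := by
    rw [hU, hV]
    calc Matrix.fromBlocks (1 : Matrix (Fin (s+1) × Fin n) (Fin (s+1) × Fin n) (Polynomial F)) (Ym M σ) 0 (1 : Matrix (Fin s × Fin n) (Fin s × Fin n) (Polynomial F)) * Matrix.fromBlocks (Qm (F:=F) s n)ᵀ 0 0 (1 : Matrix (Fin s × Fin n) (Fin s × Fin n) (Polynomial F))
          * blockKron F s n σ M
          * ((Matrix.fromBlocks (Qm (F:=F) s n) 0 0 (1 : Matrix (Fin s × Fin n) (Fin s × Fin n) (Polynomial F)) * Matrix.fromBlocks (1 : Matrix (Fin (s+1) × Fin n) (Fin (s+1) × Fin n) (Polynomial F)) 0 (Wm M) (1 : Matrix (Fin s × Fin n) (Fin s × Fin n) (Polynomial F))) * V3)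
        = Matrix.fromBlocks (1 : Matrix (Fin (s+1) × Fin n) (Fin (s+1) × Fin n) (Polynomial F)) (Ym M σ) 0 (1 : Matrix (Fin s × Fin n) (Fin s × Fin n) (Polynomial F))
          * (Matrix.fromBlocks (Qm (F:=F) s n)ᵀ 0 0 (1 : Matrix (Fin s × Fin n) (Fin s × Fin n) (Polynomial F))
            * (blockKron F s n σ M
              * (Matrix.fromBlocks (Qm (F:=F) s n) 0 0 (1 : Matrix (Fin s × Fin n) (Fin s × Fin n) (Polynomial F))
                * (Matrix.fromBlocks (1 : Matrix (Fin (s+1) × Fin n) (Fin (s+1) × Fin n) (Polynomial F)) 0 (Wm M) (1 : Matrix (Fin s × Fin n) (Fin s × Fin n) (Polynomial F)) * V3)))) := by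
          simp only [Matrix.mul_assoc]
    _ = Matrix.fromBlocks (1 : Matrix (Fin (s+1) × Fin n) (Fin (s+1) × Fin n) (Polynomial F)) (Ym M σ) 0 (1 : Matrix (Fin s × Fin n) (Fin s × Fin n) (Polynomial F))
          * (Matrix.fromBlocks (Nn M) (Cm (F:=F) s n)ᵀ (σ • Cm (F:=F) s n) 0
            * (Matrix.fromBlocks (1 : Matrix (Fin (s+1) × Fin n) (Fin (s+1) × Fin n) (Polynomial F)) 0 (Wm M) (1 : Matrix (Fin s × Fin n) (Fin s × Fin n) (Polynomial F)) * V3)) := by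
          rw [hstep0']
    _ = (Matrix.fromBlocks (1 : Matrix (Fin (s+1) × Fin n) (Fin (s+1) × Fin n) (Polynomial F)) (Ym M σ) 0 (1 : Matrix (Fin s × Fin n) (Fin s × Fin n) (Polynomial F))
          * Matrix.fromBlocks (Nn M) (Cm (F:=F) s n)ᵀ (σ • Cm (F:=F) s n) 0
          * Matrix.fromBlocks (1 : Matrix (Fin (s+1) × Fin n) (Fin (s+1) × Fin n) (Polynomial F)) 0 (Wm M) (1 : Matrix (Fin s × Fin n) (Fin s × Fin n) (Polynomial F))) * V3 := by
          simp only [Matrix.mul_assoc]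
    _ = Matrix.fromBlocks (Phat M) (Cm (F:=F) s n)ᵀ (σ • Cm (F:=F) s n) 0 * V3 := by
          rw [step1]
    _ = _ := step2
  -- facts about p
  have hne0 : ∀ x : Fin (s+1) × Fin n, ¬ p (Sum.inl x) → ¬ ((x.1:ℕ) = 0) := by
    intro x hx h0
    apply hx
    rw [hp]
    refine ⟨x.2, ?_⟩
    have hx1 : x.1 = 0 := Fin.ext h0
    rw [← hx1]
  -- entry computations for the final matrix
  set T : Matrix ((Fin (s+1) × Fin n) ⊕ (Fin s × Fin n))
      ((Fin (s+1) × Fin n) ⊕ (Fin s × Fin n)) (Polynomial F) :=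
    Matrix.fromBlocks (Phat M
      + ((1 : Matrix (Fin (s+1) × Fin n) (Fin (s+1) × Fin n) (Polynomial F))
          - Em (F:=F) s n)) 0 0 1 with hT
  have hEm_apply : ∀ x y : Fin (s+1) × Fin n,
      Em (F:=F) s n x y = if (x.1:ℕ) = 0 ∧ (y.1:ℕ) = 0 then
        (if x.2 = y.2 then (1 : Polynomial F) else 0) else 0 := by
    intro x y
    rw [Em, Matrix.kroneckerMap_apply]
    simp only [E0, Matrix.of_apply, Matrix.one_apply]
    by_cases h : (x.1:ℕ) = 0 ∧ (y.1:ℕ) = 0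
    · rw [if_pos h, if_pos h, one_mul]
    · rw [if_neg h, if_neg h, zero_mul]
  have Tdiag : ∀ a b : (Fin (s+1) × Fin n) ⊕ (Fin s × Fin n), ¬ p a → ¬ p b →
      T a b = if a = b then 1 else 0 := by
    rintro (x | q) (y | q') hpa hpb
    · have hx : ¬ ((x.1:ℕ) = 0) := hne0 x hpa
      rw [hT, Matrix.fromBlocks_apply₁₁, Matrix.add_apply, Matrix.sub_apply, hEm_apply,
        if_neg (fun h => hx h.1), Phat, Matrix.of_apply, if_neg (fun h => hx h.1),
        Matrix.one_apply]
      simp only [Sum.inl.injEq, zero_add, sub_zero]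
    · rw [hT, Matrix.fromBlocks_apply₁₂, Matrix.zero_apply, if_neg (by simp)]
    · rw [hT, Matrix.fromBlocks_apply₂₁, Matrix.zero_apply, if_neg (by simp)]
    · rw [hT, Matrix.fromBlocks_apply₂₂, Matrix.one_apply]
      simp only [Sum.inr.injEq]
  have Trow : ∀ (r : Fin n) (b : (Fin (s+1) × Fin n) ⊕ (Fin s × Fin n)), ¬ p b →
      T (Sum.inl ((0 : Fin (s+1)), r)) b = 0 := by
    rintro r (y | q') hpb
    · have hy : ¬ ((y.1:ℕ) = 0) := hne0 y hpb
      rw [hT, Matrix.fromBlocks_apply₁₁, Matrix.add_apply, Matrix.sub_apply, hEm_apply,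
        if_neg (fun h => hy h.2), Phat, Matrix.of_apply, if_neg (fun h => hy h.2),
        Matrix.one_apply, if_neg (fun h => hy (by rw [← h]; rfl))]
      ring
    · rw [hT, Matrix.fromBlocks_apply₁₂, Matrix.zero_apply]
  have Tcol : ∀ (a : (Fin (s+1) × Fin n) ⊕ (Fin s × Fin n)) (c : Fin n), ¬ p a →
      T a (Sum.inl ((0 : Fin (s+1)), c)) = 0 := by
    rintro (x | q) c hpa
    · have hx : ¬ ((x.1:ℕ) = 0) := hne0 x hpa
      rw [hT, Matrix.fromBlocks_apply₁₁, Matrix.add_apply, Matrix.sub_apply, hEm_apply,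
        if_neg (fun h => hx h.1), Phat, Matrix.of_apply, if_neg (fun h => hx h.1),
        Matrix.one_apply, if_neg (fun h => hx (by rw [h]; rfl))]
      ring
    · rw [hT, Matrix.fromBlocks_apply₂₁, Matrix.zero_apply]
  have Tcorner : ∀ r c : Fin n,
      T (Sum.inl ((0 : Fin (s+1)), r)) (Sum.inl ((0 : Fin (s+1)), c)) = PP M r c := by
    intro r c
    rw [hT, Matrix.fromBlocks_apply₁₁, Matrix.add_apply, Matrix.sub_apply, hEm_apply,
      Phat, Matrix.of_apply, Matrix.one_apply]
    have h0 : ((0 : Fin (s+1)):ℕ) = 0 ∧ ((0 : Fin (s+1)):ℕ) = 0 := ⟨rfl, rfl⟩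
    rw [if_pos h0, if_pos h0]
    by_cases hrc : r = c
    · rw [if_pos hrc, if_pos (by rw [hrc])]
      ring
    · rw [if_neg hrc, if_neg (fun h => hrc (Prod.ext_iff.mp h).2)]
      ring
  -- conclusion
  refine ⟨e, U, V, Matrix.isUnit_det_of_right_inverse hUUi,
    Matrix.isUnit_det_of_right_inverse hVVi, ?_⟩
  rw [hProd]
  refine Matrix.ext fun a b => ?_
  rw [Matrix.submatrix_apply]
  rcases hA : e.symm a with k | r <;> rcases hB : e.symm b with k' | c
  · have ha : a = e (Sum.inl k) := by rw [← hA, Equiv.apply_symm_apply]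
    have hb : b = e (Sum.inl k') := by rw [← hB, Equiv.apply_symm_apply]
    have hpa : ¬ p a := ha ▸ he_inl k
    have hpb : ¬ p b := hb ▸ he_inl k'
    rw [Matrix.fromBlocks_apply₁₁, Matrix.one_apply]
    rw [Tdiag a b hpa hpb]
    have hiff : (a = b) ↔ (k = k') := by
      constructor
      · intro h
        have h2 : e.symm a = e.symm b := by rw [h]
        rw [hA, hB] at h2
        exact Sum.inl.inj h2
      · intro h
        rw [ha, hb, h]
    by_cases h : k = k'
    · rw [if_pos (hiff.mpr h), if_pos h]
    · rw [if_neg (fun hh => h (hiff.mp hh)), if_neg h]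
  · have ha : a = e (Sum.inl k) := by rw [← hA, Equiv.apply_symm_apply]
    have hb : b = Sum.inl ((0 : Fin (s+1)), c) := by
      rw [show b = e (Sum.inr c) from by rw [← hB, Equiv.apply_symm_apply], he_inr]
    have hpa : ¬ p a := ha ▸ he_inl k
    rw [Matrix.fromBlocks_apply₁₂, Matrix.zero_apply]
    rw [hb, Tcol a c hpa]
  · have hb : b = e (Sum.inl k') := by rw [← hB, Equiv.apply_symm_apply]
    have ha : a = Sum.inl ((0 : Fin (s+1)), r) := by
      rw [show a = e (Sum.inr r) from by rw [← hA, Equiv.apply_symm_apply], he_inr]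
    have hpb : ¬ p b := hb ▸ he_inl k'
    rw [Matrix.fromBlocks_apply₂₁, Matrix.zero_apply]
    rw [ha, Trow r b hpb]
  · have ha : a = Sum.inl ((0 : Fin (s+1)), r) := by
      rw [show a = e (Sum.inr r) from by rw [← hA, Equiv.apply_symm_apply], he_inr]
    have hb : b = Sum.inl ((0 : Fin (s+1)), c) := by
      rw [show b = e (Sum.inr c) from by rw [← hB, Equiv.apply_symm_apply], he_inr]
    rw [Matrix.fromBlocks_apply₂₂]
    rw [ha, hb, Tcorner r c]
    rfl

end Key

/-! ### The reversal -/

section Rev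

variable {s n : ℕ}

lemma pencil_apply {A B : Matrix (Fin (s+1) × Fin n) (Fin (s+1) × Fin n) F}
    (x y : Fin (s+1) × Fin n) :
    pencil A B x y = C (A x y) + X * C (B x y) := by
  rw [pencil, Matrix.add_apply, Matrix.smul_apply, matC, matC, Matrix.map_apply,
    Matrix.map_apply, smul_eq_mul]

lemma reflect_one_pencil_entry (a b : F) :
    reflect 1 (C a + X * C b) = C b + X * C a := by
  have h1 : C a + X * C b = C a * X ^ 0 + C b * X ^ 1 := by ring
  rw [h1, reflect_add, reflect_C_mul_X_pow, reflect_C_mul_X_pow,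
    revAt_le (by norm_num : (0:ℕ) ≤ 1), revAt_le (le_refl 1)]
  ring

lemma rev_pencil (A B : Matrix (Fin (s+1) × Fin n) (Fin (s+1) × Fin n) F) :
    revMat 1 (pencil A B) = pencil B A := by
  refine Matrix.ext fun x y => ?_
  rw [revMat, Matrix.map_apply, pencil_apply, pencil_apply, reflect_one_pencil_entry]

lemma neg_kron {a b c d : ℕ} (A : Matrix (Fin a) (Fin b) (Polynomial F))
    (B : Matrix (Fin c) (Fin d) (Polynomial F)) :
    (-A) ⊗ₖ B = -(A ⊗ₖ B) := by
  refine Matrix.ext fun i j => ?_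
  simp only [Matrix.kroneckerMap_apply, Matrix.neg_apply, neg_mul]

lemma rev_kron_one {a b : ℕ} (A : Matrix (Fin a) (Fin b) (Polynomial F)) (g : ℕ) :
    revMat g (A ⊗ₖ (1 : Matrix (Fin n) (Fin n) (Polynomial F)))
      = (revMat g A) ⊗ₖ (1 : Matrix (Fin n) (Fin n) (Polynomial F)) := by
  refine Matrix.ext fun i j => ?_
  rw [revMat, revMat, Matrix.map_apply, Matrix.kroneckerMap_apply, Matrix.kroneckerMap_apply,
    Matrix.map_apply, Matrix.one_apply]
  by_cases h : i.2 = j.2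
  · rw [if_pos h, mul_one, mul_one]
  · rw [if_neg h, mul_zero, mul_zero, reflect_zero]

lemma rev_Km : revMat 1 (Km (F:=F) s n) = -(Jsm (F:=F) s n * Km (F:=F) s n * Jm (F:=F) s n) := by
  rw [Km, rev_kron_one]
  have h1 : revMat 1 (Lpen F s) = -(Js F s * Lpen F s * J1 F s) := rev_Lpen s
  rw [h1, neg_kron, Jsm, Jm, ← Matrix.mul_kronecker_mul, ← Matrix.mul_kronecker_mul,
    Matrix.one_mul, Matrix.one_mul]

lemma rev_smul (σ : F) {a b : ℕ} (A : Matrix (Fin a × Fin n) (Fin b × Fin n) (Polynomial F))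
    (g : ℕ) : revMat g (σ • A) = σ • revMat g A := by
  refine Matrix.ext fun i j => ?_
  rw [revMat, revMat, Matrix.map_apply, Matrix.smul_apply, Matrix.smul_apply,
    Matrix.map_apply, smul_eq_C_mul, smul_eq_C_mul, reflect_C_mul]

lemma rev_transpose {a b : ℕ} (A : Matrix (Fin a × Fin n) (Fin b × Fin n) (Polynomial F))
    (g : ℕ) : revMat g Aᵀ = (revMat g A)ᵀ := by
  refine Matrix.ext fun i j => ?_
  rfl

lemma rev_blockKron (σ : F) (A B : Matrix (Fin (s+1) × Fin n) (Fin (s+1) × Fin n) F) :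
    revMat 1 (blockKron F s n σ (pencil A B))
      = Matrix.fromBlocks (pencil B A) ((revMat 1 (Km (F:=F) s n))ᵀ)
          (σ • revMat 1 (Km (F:=F) s n)) 0 := by
  have hBK : blockKron F s n σ (pencil A B)
      = Matrix.fromBlocks (pencil A B) (Km (F:=F) s n)ᵀ (σ • Km (F:=F) s n) 0 := rfl
  rw [hBK, revMat, Matrix.fromBlocks_map]
  have h0 : (0 : Matrix (Fin s × Fin n) (Fin s × Fin n) (Polynomial F)).map
      (fun q => reflect 1 q) = 0 := by
    refine Matrix.ext fun i j => ?_
    rw [Matrix.map_apply, Matrix.zero_apply, reflect_zero]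
  rw [h0]
  rw [show ((Km (F:=F) s n)ᵀ).map (fun q => reflect 1 q) = revMat 1 ((Km (F:=F) s n)ᵀ) from rfl,
    show ((pencil A B).map (fun q => reflect 1 q)) = revMat 1 (pencil A B) from rfl,
    show ((σ • Km (F:=F) s n).map (fun q => reflect 1 q)) = revMat 1 (σ • Km (F:=F) s n) from rfl,
    rev_pencil, rev_smul, rev_transpose]

def Dm (s n : ℕ) : Matrix ((Fin (s+1) × Fin n) ⊕ (Fin s × Fin n))
    ((Fin (s+1) × Fin n) ⊕ (Fin s × Fin n)) (Polynomial F) :=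
  Matrix.fromBlocks (Jm (F:=F) s n) 0 0 (-(Jsm (F:=F) s n))

lemma Dm_mul_Dm : Dm (F:=F) s n * Dm (F:=F) s n = 1 := by
  rw [Dm, Matrix.fromBlocks_multiply]
  simp only [Matrix.mul_zero, Matrix.zero_mul, add_zero, zero_add, Matrix.neg_mul,
    Matrix.mul_neg, neg_neg, neg_zero, Jm_mul_Jm, Jsm_mul_Jsm, Matrix.fromBlocks_one]

lemma rev_factor (σ : F) (A B : Matrix (Fin (s+1) × Fin n) (Fin (s+1) × Fin n) F) :
    Dm (F:=F) s n * revMat 1 (blockKron F s n σ (pencil A B)) * Dm (F:=F) s n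
      = blockKron F s n σ (Jm (F:=F) s n * pencil B A * Jm (F:=F) s n) := by
  rw [rev_blockKron, rev_Km, Dm, Matrix.fromBlocks_multiply, Matrix.fromBlocks_multiply]
  simp only [Matrix.mul_zero, Matrix.zero_mul, add_zero, zero_add]
  have hBK : blockKron F s n σ (Jm (F:=F) s n * pencil B A * Jm (F:=F) s n)
      = Matrix.fromBlocks (Jm (F:=F) s n * pencil B A * Jm (F:=F) s n)
          (Km (F:=F) s n)ᵀ (σ • Km (F:=F) s n) 0 := rfl
  rw [hBK]
  have hb12 : Jm (F:=F) s n * (-(Jsm (F:=F) s n * Km (F:=F) s n * Jm (F:=F) s n))ᵀ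
      * (-(Jsm (F:=F) s n)) = (Km (F:=F) s n)ᵀ := by
    simp only [Matrix.transpose_neg, Matrix.mul_neg, Matrix.neg_mul, neg_neg]
    rw [Matrix.transpose_mul, Matrix.transpose_mul, Jm_transpose, Jsm_transpose]
    calc Jm (F:=F) s n * (Jm (F:=F) s n * ((Km (F:=F) s n)ᵀ * Jsm (F:=F) s n)) * Jsm (F:=F) s n
        = (Jm (F:=F) s n * Jm (F:=F) s n) * ((Km (F:=F) s n)ᵀ
            * (Jsm (F:=F) s n * Jsm (F:=F) s n)) := by
          simp only [Matrix.mul_assoc]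
    _ = (Km (F:=F) s n)ᵀ := by rw [Jm_mul_Jm, Jsm_mul_Jsm, Matrix.one_mul, Matrix.mul_one]
  have hb21 : (-(Jsm (F:=F) s n)) * (σ • -(Jsm (F:=F) s n * Km (F:=F) s n * Jm (F:=F) s n))
      * Jm (F:=F) s n = σ • Km (F:=F) s n := by
    simp only [smul_neg, Matrix.mul_neg, Matrix.neg_mul, neg_neg, Matrix.mul_smul,
      Matrix.smul_mul]
    congr 1
    calc Jsm (F:=F) s n * (Jsm (F:=F) s n * Km (F:=F) s n * Jm (F:=F) s n) * Jm (F:=F) s n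
        = (Jsm (F:=F) s n * Jsm (F:=F) s n) * (Km (F:=F) s n
            * (Jm (F:=F) s n * Jm (F:=F) s n)) := by
          simp only [Matrix.mul_assoc]
    _ = Km (F:=F) s n := by rw [Jm_mul_Jm, Jsm_mul_Jsm, Matrix.one_mul, Matrix.mul_one]
  rw [hb12, hb21]

def LamRev (s n : ℕ) : Matrix (Fin (s+1) × Fin n) (Fin n) (Polynomial F) :=
  Matrix.of fun p c => if p.2 = c then (X : Polynomial F) ^ ((p.1 : ℕ)) else 0

lemma Jm_mul_Lam : Jm (F:=F) s n * Lam F s n = LamRev (F:=F) s n := by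
  refine Matrix.ext fun a c => ?_
  obtain ⟨i, r⟩ := a
  rw [Matrix.mul_apply, Fintype.sum_prod_type]
  have hi : (i:ℕ) ≤ s := Fin.is_le i
  have inner : ∀ k : Fin (s+1),
      (∑ t : Fin n, Jm (F:=F) s n (i, r) (k, t) * Lam F s n (k, t) c)
        = if (i:ℕ) + (k:ℕ) = s then Lam F s n (k, r) c else 0 := by
    intro k
    have term : ∀ t : Fin n, Jm (F:=F) s n (i, r) (k, t) * Lam F s n (k, t) c
        = if t = r then (if (i:ℕ) + (k:ℕ) = s then Lam F s n (k, t) c else 0) else 0 := by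
      intro t
      rw [Jm, Matrix.kroneckerMap_apply]
      simp only [J1, Matrix.of_apply, Matrix.one_apply]
      by_cases ht : t = r
      · by_cases hk : (i:ℕ) + (k:ℕ) = s
        · simp [ht, hk]
        · simp [ht, hk]
      · have ht' : ¬ (r = t) := fun h => ht h.symm
        simp [ht, ht']
    rw [Finset.sum_congr rfl fun t _ => term t, Finset.sum_ite_eq']
    simp
  rw [Finset.sum_congr rfl fun k _ => inner k]
  have key2 : ∀ k : Fin (s+1), ((i:ℕ) + (k:ℕ) = s) ↔ k = (⟨s - (i:ℕ), by omega⟩ : Fin (s+1)) := by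
    intro k; simp only [Fin.ext_iff]; omega
  rw [sum_ite_iff _ _ _ key2]
  simp only [Lam, LamRev, Matrix.of_apply]
  by_cases hrc : r = c
  · rw [if_pos hrc, if_pos hrc, show s - (s - (i:ℕ)) = (i:ℕ) by omega]
  · rw [if_neg hrc, if_neg hrc]

lemma reflect_sum {ι : Type*} (t : Finset ι) (f : ι → Polynomial F) (N : ℕ) :
    reflect N (∑ i ∈ t, f i) = ∑ i ∈ t, reflect N (f i) := by
  induction t using Finset.cons_induction with
  | empty => simp
  | cons a t ha ih => rw [Finset.sum_cons, Finset.sum_cons, reflect_add, ih]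

lemma rev_P (A B : Matrix (Fin (s+1) × Fin n) (Fin (s+1) × Fin n) F) :
    (Lam F s n)ᵀ * (Jm (F:=F) s n * pencil B A * Jm (F:=F) s n) * Lam F s n
      = revMat (2*s+1) ((Lam F s n)ᵀ * pencil A B * Lam F s n) := by
  have hLT : (Lam F s n)ᵀ * Jm (F:=F) s n = (LamRev (F:=F) s n)ᵀ := by
    rw [← Jm_mul_Lam, Matrix.transpose_mul, Jm_transpose]
  have hassoc : (Lam F s n)ᵀ * (Jm (F:=F) s n * pencil B A * Jm (F:=F) s n) * Lam F s n
      = ((Lam F s n)ᵀ * Jm (F:=F) s n) * pencil B A * (Jm (F:=F) s n * Lam F s n) := by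
    simp only [Matrix.mul_assoc]
  rw [hassoc, hLT, Jm_mul_Lam]
  refine Matrix.ext fun r c => ?_
  rw [revMat, Matrix.map_apply, Matrix.mul_apply, Matrix.mul_apply, reflect_sum]
  refine Finset.sum_congr rfl fun b _ => ?_
  rw [Matrix.mul_apply, Matrix.mul_apply, Finset.sum_mul, Finset.sum_mul, reflect_sum]
  refine Finset.sum_congr rfl fun a _ => ?_
  obtain ⟨i, t⟩ := a
  obtain ⟨j, t'⟩ := b
  rw [Matrix.transpose_apply, Matrix.transpose_apply, pencil_apply, pencil_apply]
  simp only [Lam, LamRev, Matrix.of_apply]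
  have hi : (i:ℕ) ≤ s := Fin.is_le i
  have hj : (j:ℕ) ≤ s := Fin.is_le j
  by_cases ht : t = r
  · by_cases ht' : t' = c
    · rw [if_pos ht, if_pos ht, if_pos ht', if_pos ht']
      have expand : X ^ (s - (i:ℕ)) * (C (A (i,t) (j,t')) + X * C (B (i,t) (j,t')))
            * X ^ (s - (j:ℕ))
          = C (A (i,t) (j,t')) * X ^ ((s - (i:ℕ)) + (s - (j:ℕ)))
            + C (B (i,t) (j,t')) * X ^ ((s - (i:ℕ)) + (s - (j:ℕ)) + 1) := by
        ring
      rw [expand, reflect_add, reflect_C_mul_X_pow, reflect_C_mul_X_pow,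
        revAt_le (by omega : (s - (i:ℕ)) + (s - (j:ℕ)) ≤ 2*s+1),
        revAt_le (by omega : (s - (i:ℕ)) + (s - (j:ℕ)) + 1 ≤ 2*s+1),
        show 2*s+1 - ((s - (i:ℕ)) + (s - (j:ℕ))) = (i:ℕ) + (j:ℕ) + 1 by omega,
        show 2*s+1 - ((s - (i:ℕ)) + (s - (j:ℕ)) + 1) = (i:ℕ) + (j:ℕ) by omega]
      ring
    · rw [if_neg ht', if_neg ht', mul_zero, mul_zero, reflect_zero]
  · rw [if_neg ht, if_neg ht, zero_mul, zero_mul, zero_mul, zero_mul, reflect_zero]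

end Rev

end BK
end BKDev

/-- Every block Kronecker pencil is a strong linearization of
`P(λ) = (Λ_s(λ)ᵀ⊗I_n)(λB+A)(Λ_s(λ)⊗I_n)` regarded as a polynomial of grade `2s+1`. -/
theorem stmt_2 {F : Type} [Field F] (n s : ℕ) (hn : 0 < n) (hs : 0 < s)
    (σ : F) (hσ : σ = 1 ∨ σ = -1)
    (A B : Matrix (Fin (s+1) × Fin n) (Fin (s+1) × Fin n) F) :
    IsLinearization (2*s*n) (blockKron F s n σ (pencil A B))
        ((Lam F s n)ᵀ * pencil A B * Lam F s n) ∧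
      IsLinearization (2*s*n) (revMat 1 (blockKron F s n σ (pencil A B)))
        (revMat (2*s+1) ((Lam F s n)ᵀ * pencil A B * Lam F s n)) := by
  have hs' : σ ≠ 0 := by
    rcases hσ with h | h <;> rw [h] <;> simp
  constructor
  · exact BK.key σ hs' (pencil A B)
  · obtain ⟨e, U, V, hU, hV, hUV⟩ :=
      BK.key σ hs' (BK.Jm (F:=F) s n * pencil B A * BK.Jm (F:=F) s n)
    refine ⟨e, U * BK.Dm (F:=F) s n, BK.Dm (F:=F) s n * V, ?_, ?_, ?_⟩
    · rw [Matrix.det_mul]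
      exact hU.mul (Matrix.isUnit_det_of_right_inverse BK.Dm_mul_Dm)
    · rw [Matrix.det_mul]
      exact (Matrix.isUnit_det_of_right_inverse BK.Dm_mul_Dm).mul hV
    · have hassoc : (U * BK.Dm (F:=F) s n) * revMat 1 (blockKron F s n σ (pencil A B))
          * (BK.Dm (F:=F) s n * V)
          = U * (BK.Dm (F:=F) s n * revMat 1 (blockKron F s n σ (pencil A B))
              * BK.Dm (F:=F) s n) * V := by
        simp only [Matrix.mul_assoc]
      rw [hassoc, BK.rev_factor σ A B, hUV, BK.rev_P A B]
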